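/- arXiv:1610.05558 — 3 statements merged into one kernel-verified Lean document; each statement's English description precedes it below -/
import Mathlib

section
/- Let n ≥ 1, s ∈ (0,1), and let Ω ⊂ ℝⁿ be a bounded open set. Then there exists a constant c = c(Ω,n,s) > 0 such that ‖v‖_{L²(ℝⁿ)} ≤ c ( ∬_{ℝⁿ×ℝⁿ} |v(x)−v(y)|²/|x−y|^{n+2s} dx dy )^{1/2} for every v ∈ L²(ℝⁿ) whose support is contained in the closure of Ω. -/
open MeasureTheory Real Filter Set

/-- **Fractional Poincaré inequality.** For a bounded open set `Ω ⊆ ℝⁿ` and `s ∈ (0,1)`,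
there is a constant `c > 0` such that `‖v‖_{L²(ℝⁿ)} ≤ c |v|_{H^s(ℝⁿ)}` for every
`v ∈ L²(ℝⁿ)` supported in the closure of `Ω`. -/
theorem fractional_poincare (n : ℕ) (hn : 1 ≤ n) (s : ℝ) (hs : s ∈ Set.Ioo (0:ℝ) 1)
    (Ω : Set (EuclideanSpace ℝ (Fin n))) (hΩo : IsOpen Ω) (hΩb : Bornology.IsBounded Ω) :
    ∃ c : ℝ, 0 < c ∧
      ∀ v : EuclideanSpace ℝ (Fin n) → ℝ,
        MemLp v 2 volume → Function.support v ⊆ closure Ω →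
        eLpNorm v 2 volume ≤
          ENNReal.ofReal c *
            (∫⁻ x, ∫⁻ y, ENNReal.ofReal ((v x - v y) ^ 2 / ‖x - y‖ ^ ((n : ℝ) + 2 * s))) ^
              (1 / 2 : ℝ) := by
  obtain ⟨s0, s1⟩ := hs
  obtain ⟨R, hR0, hΩR⟩ : ∃ r, 0 < r ∧ closure Ω ⊆ Metric.ball 0 r :=
    hΩb.closure.subset_ball_lt 0 0
  set p : ℝ := (n : ℝ) + 2 * s with hp_def
  have hp : 0 < p := by positivity
  set z : EuclideanSpace ℝ (Fin n) := EuclideanSpace.single ⟨0, hn⟩ (5 * R / 2) with hz_def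
  have hz : ‖z‖ = 5 * R / 2 := by
    rw [hz_def, EuclideanSpace.norm_single, Real.norm_eq_abs, abs_of_pos (by positivity)]
  set K : Set (EuclideanSpace ℝ (Fin n)) := Metric.closedBall z (R / 2) with hK_def
  have hμK0 : 0 < volume K := Metric.measure_closedBall_pos _ _ (by positivity)
  have hμKt : volume K ≠ ⊤ := (MeasureTheory.measure_closedBall_lt_top).ne
  set c₀ : ℝ := (4 * R) ^ p with hc₀
  have hc₀0 : 0 < c₀ := Real.rpow_pos_of_pos (by positivity) _
  set k : ENNReal := ENNReal.ofReal c₀⁻¹ * volume K with hk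
  have hk0 : k ≠ 0 := by
    simp only [hk, ne_eq, mul_eq_zero, ENNReal.ofReal_eq_zero, not_or, not_le]
    exact ⟨by positivity, hμK0.ne'⟩
  have hkt : k ≠ ⊤ := ENNReal.mul_ne_top ENNReal.ofReal_ne_top hμKt
  have hkit : k⁻¹ ≠ ⊤ := by simp [hk0]
  refine ⟨(k⁻¹.toReal) ^ (1/2 : ℝ), Real.rpow_pos_of_pos (ENNReal.toReal_pos (by simp [hkt]) hkit) _, ?_⟩
  intro v hv hsupp
  -- key pointwise bound
  have key : ∀ x, k * ENNReal.ofReal (v x ^ 2) ≤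
      ∫⁻ y, ENNReal.ofReal ((v x - v y) ^ 2 / ‖x - y‖ ^ p) := by
    intro x
    by_cases hvx : v x = 0
    · simp [hvx]
    have hx : ‖x‖ < R := by
      have : x ∈ Metric.ball (0 : EuclideanSpace ℝ (Fin n)) R :=
        hΩR (hsupp (Function.mem_support.2 hvx))
      simpa [mem_ball_zero_iff] using this
    calc k * ENNReal.ofReal (v x ^ 2)
        = ∫⁻ y, K.indicator (fun _ => ENNReal.ofReal (v x ^ 2 / c₀)) y := by
          rw [lintegral_indicator_const measurableSet_closedBall]
          rw [div_eq_inv_mul, ENNReal.ofReal_mul (by positivity)]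
          ring
      _ ≤ ∫⁻ y, ENNReal.ofReal ((v x - v y) ^ 2 / ‖x - y‖ ^ p) := by
          refine lintegral_mono fun y => ?_
          by_cases hy : y ∈ K
          · rw [Set.indicator_of_mem hy]
            have hyz : ‖y - z‖ ≤ R / 2 := by
              rw [← dist_eq_norm]; exact Metric.mem_closedBall.1 hy
            have hylb : 2 * R ≤ ‖y‖ := by
              have := norm_sub_norm_le z y
              rw [norm_sub_rev] at hyz
              linarith [norm_sub_rev z y ▸ hyz, hz ▸ this]
            have hyub : ‖y‖ ≤ 3 * R := by
              have := norm_le_norm_add_norm_sub' y z  -- ?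
              linarith [hyz, hz ▸ this]
            have hvy : v y = 0 := by
              by_contra h
              have : y ∈ Metric.ball (0 : EuclideanSpace ℝ (Fin n)) R :=
                hΩR (hsupp (Function.mem_support.2 h))
              rw [mem_ball_zero_iff] at this
              linarith
            have hxyl : R < ‖x - y‖ := by
              have := norm_sub_norm_le y x
              rw [norm_sub_rev y x] at this
              linarith
            have hxyu : ‖x - y‖ ≤ 4 * R := by
              have := norm_sub_le x y
              linarith
            apply ENNReal.ofReal_le_ofReal
            rw [hvy, sub_zero]
            have h1 : ‖x - y‖ ^ p ≤ c₀ :=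
              Real.rpow_le_rpow (norm_nonneg _) hxyu hp.le
            have h2 : (0:ℝ) < ‖x - y‖ ^ p :=
              Real.rpow_pos_of_pos (lt_trans hR0 hxyl) _
            exact div_le_div_of_nonneg_left (sq_nonneg _) h2 h1
          · rw [Set.indicator_of_notMem hy]; exact zero_le
  have main : k * ∫⁻ x, ENNReal.ofReal (v x ^ 2) ≤
      ∫⁻ x, ∫⁻ y, ENNReal.ofReal ((v x - v y) ^ 2 / ‖x - y‖ ^ p) := by
    rw [← lintegral_const_mul' _ _ hkt]
    exact lintegral_mono key
  have hsnorm : eLpNorm v 2 volume = (∫⁻ x, ENNReal.ofReal (v x ^ 2)) ^ (1/2 : ℝ) := by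
    rw [eLpNorm_eq_lintegral_rpow_enorm_toReal (by norm_num) (by norm_num)]
    norm_num
    congr 1
    refine lintegral_congr fun x => ?_
    rw [← ofReal_norm]
    rw [← ENNReal.ofReal_pow (norm_nonneg _), Real.norm_eq_abs, sq_abs]
  have hE : (∫⁻ x, ENNReal.ofReal (v x ^ 2)) ≤
      k⁻¹ * ∫⁻ x, ∫⁻ y, ENNReal.ofReal ((v x - v y) ^ 2 / ‖x - y‖ ^ p) := by
    calc (∫⁻ x, ENNReal.ofReal (v x ^ 2))
        = k⁻¹ * (k * ∫⁻ x, ENNReal.ofReal (v x ^ 2)) := by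
          rw [← mul_assoc, ENNReal.inv_mul_cancel hk0 hkt, one_mul]
      _ ≤ _ := mul_le_mul_right main _
  calc eLpNorm v 2 volume = (∫⁻ x, ENNReal.ofReal (v x ^ 2)) ^ (1/2 : ℝ) := hsnorm
    _ ≤ (k⁻¹ * ∫⁻ x, ∫⁻ y, ENNReal.ofReal ((v x - v y) ^ 2 / ‖x - y‖ ^ p)) ^ (1/2 : ℝ) :=
        ENNReal.rpow_le_rpow hE (by norm_num)
    _ = ENNReal.ofReal (k⁻¹.toReal ^ (1/2 : ℝ)) *
        (∫⁻ x, ∫⁻ y, ENNReal.ofReal ((v x - v y) ^ 2 / ‖x - y‖ ^ p)) ^ (1/2 : ℝ) := by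
        rw [ENNReal.mul_rpow_of_nonneg _ _ (by norm_num)]
        congr 1
        rw [← ENNReal.ofReal_rpow_of_nonneg ENNReal.toReal_nonneg (by norm_num),
          ENNReal.ofReal_toReal hkit]
end

section
/- Let s ∈ (0,1), R > 0, and let x = (x₁, 0) ∈ ℝ² with 0 ≤ x₁ < R. Then the integral ψ(x) = ∫_{ℝ² ∖ B(0,R)} |x−y|^{−(2+2s)} dy is finite and ψ(x) = (1/(2s)) ∫₀^{2π} ρ₀(θ, x)^{−2s} dθ, where ρ₀(θ, x) = −x₁ cos θ + √(R² − x₁² sin² θ). -/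
open MeasureTheory Real Filter Set

/-- The point `(a, b) ∈ ℝ²` (with the Euclidean norm). -/
noncomputable def e2 (a b : ℝ) : EuclideanSpace ℝ (Fin 2) :=
  (WithLp.equiv 2 (Fin 2 → ℝ)).symm ![a, b]

namespace ComplementPolarAux

theorem lintegral_comp_polarCoord_symm' (f : ℝ × ℝ → ENNReal) :
    (∫⁻ p in polarCoord.target, ENNReal.ofReal p.1 * f (polarCoord.symm p)) = ∫⁻ p, f p := by
  set B : ℝ × ℝ → ℝ × ℝ →L[ℝ] ℝ × ℝ := fun p =>
    LinearMap.toContinuousLinearMap (Matrix.toLin (Module.Basis.finTwoProd ℝ) (Module.Basis.finTwoProd ℝ)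
      !![cos p.2, -p.1 * sin p.2; sin p.2, p.1 * cos p.2])
  have B_det : ∀ p, (B p).det = p.1 := by
    intro p
    conv_rhs => rw [← one_mul p.1, ← cos_sq_add_sin_sq p.2]
    simp only [B, neg_mul, LinearMap.det_toContinuousLinearMap, LinearMap.det_toLin,
      Matrix.det_fin_two_of, sub_neg_eq_add]
    ring
  symm
  calc
    ∫⁻ p, f p = ∫⁻ p in polarCoord.source, f p := by
      rw [← setLIntegral_univ]
      exact (setLIntegral_congr polarCoord_source_ae_eq_univ.symm)
    _ = ∫⁻ p in polarCoord.symm '' polarCoord.target, f p := by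
      rw [polarCoord.symm_image_target_eq_source]
    _ = ∫⁻ p in polarCoord.target, ENNReal.ofReal |(B p).det| * f (polarCoord.symm p) :=
      lintegral_image_eq_lintegral_abs_det_fderiv_mul volume
        polarCoord.open_target.measurableSet
        (fun p _ => (hasFDerivAt_polarCoord_symm p).hasFDerivWithinAt)
        polarCoord.symm.injOn f
    _ = ∫⁻ p in polarCoord.target, ENNReal.ofReal p.1 * f (polarCoord.symm p) := by
      apply setLIntegral_congr_fun_ae polarCoord.open_target.measurableSet
      filter_upwards with p hp
      rw [B_det, abs_of_pos hp.1]

lemma sq_sqrt_aux (R x₁ : ℝ) (hx₁ : 0 ≤ x₁) (hx₁R : x₁ < R) (θ : ℝ) :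
    (0:ℝ) ≤ R ^ 2 - x₁ ^ 2 * sin θ ^ 2 := by
  nlinarith [sin_sq_le_one θ, sq_nonneg (sin θ), sq_nonneg x₁]

lemma rho_pos (R x₁ : ℝ) (hx₁ : 0 ≤ x₁) (hx₁R : x₁ < R) (θ : ℝ) :
    0 < -x₁ * cos θ + Real.sqrt (R ^ 2 - x₁ ^ 2 * sin θ ^ 2) := by
  have h1 := sq_sqrt_aux R x₁ hx₁ hx₁R θ
  set w := Real.sqrt (R ^ 2 - x₁ ^ 2 * sin θ ^ 2) with hw
  have hw0 : 0 ≤ w := Real.sqrt_nonneg _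
  have hw2 : w ^ 2 = R ^ 2 - x₁ ^ 2 * sin θ ^ 2 := Real.sq_sqrt h1
  have hcs : sin θ ^ 2 + cos θ ^ 2 = 1 := sin_sq_add_cos_sq θ
  nlinarith [sq_nonneg (w - x₁ * cos θ), sq_nonneg (w + x₁ * cos θ)]

lemma mem_iff_aux (R x₁ : ℝ) (hx₁ : 0 ≤ x₁) (hx₁R : x₁ < R) (θ : ℝ) {r : ℝ} (hr : 0 < r) :
    R ^ 2 ≤ (r * cos θ + x₁) ^ 2 + (r * sin θ) ^ 2 ↔
      -x₁ * cos θ + Real.sqrt (R ^ 2 - x₁ ^ 2 * sin θ ^ 2) ≤ r := by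
  have h1 := sq_sqrt_aux R x₁ hx₁ hx₁R θ
  set w := Real.sqrt (R ^ 2 - x₁ ^ 2 * sin θ ^ 2) with hw
  have hw0 : 0 ≤ w := Real.sqrt_nonneg _
  have hw2 : w ^ 2 = R ^ 2 - x₁ ^ 2 * sin θ ^ 2 := Real.sq_sqrt h1
  have hcs : sin θ ^ 2 + cos θ ^ 2 = 1 := sin_sq_add_cos_sq θ
  have hfac : (r * cos θ + x₁) ^ 2 + (r * sin θ) ^ 2 - R ^ 2 =
      (r - (-x₁ * cos θ + w)) * (r + w + x₁ * cos θ) := by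
    linear_combination (r ^ 2 - x₁ ^ 2) * hcs + hw2
  have hwc : 0 < w + x₁ * cos θ := by
    nlinarith [sq_nonneg (w - x₁ * cos θ), sq_nonneg (w + x₁ * cos θ)]
  constructor
  · intro h
    nlinarith [hfac, hwc]
  · intro h
    nlinarith [mul_nonneg (by linarith : (0:ℝ) ≤ r - (-x₁ * cos θ + w))
      (by linarith : (0:ℝ) ≤ r + w + x₁ * cos θ)]

noncomputable def φ : EuclideanSpace ℝ (Fin 2) ≃ᵐ ℝ × ℝ :=
  (MeasurableEquiv.toLp 2 (Fin 2 → ℝ)).symm.trans (MeasurableEquiv.piFinTwo fun _ => ℝ)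

lemma φ_mp : MeasurePreserving φ volume volume :=
  (EuclideanSpace.volume_preserving_symm_measurableEquiv_toLp (Fin 2)).trans
    (volume_preserving_piFinTwo fun _ => ℝ)

lemma norm_e2 (z : EuclideanSpace ℝ (Fin 2)) : ‖z‖ = Real.sqrt (z 0 ^ 2 + z 1 ^ 2) := by
  rw [EuclideanSpace.norm_eq]
  simp [Fin.sum_univ_two, sq_abs]

lemma main_lintegral (s R x₁ : ℝ) (hs : s ∈ Set.Ioo (0:ℝ) 1) (hR : 0 < R)
    (hx₁ : 0 ≤ x₁) (hx₁R : x₁ < R) :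
    ∫⁻ y in (Metric.ball (0 : EuclideanSpace ℝ (Fin 2)) R)ᶜ,
        ENNReal.ofReal (‖e2 x₁ 0 - y‖ ^ (-(2 + 2 * s))) =
    ENNReal.ofReal ((1 / (2 * s)) *
        ∫ θ in (0 : ℝ)..(2 * Real.pi),
          (-x₁ * Real.cos θ + Real.sqrt (R ^ 2 - x₁ ^ 2 * Real.sin θ ^ 2)) ^ (-(2 * s))) := by
  obtain ⟨hs0, hs1⟩ := hs
  set x : EuclideanSpace ℝ (Fin 2) := e2 x₁ 0 with hx
  set ρ : ℝ → ℝ := fun θ => -x₁ * Real.cos θ + Real.sqrt (R ^ 2 - x₁ ^ 2 * Real.sin θ ^ 2)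
    with hρ
  have hρ_pos : ∀ θ, 0 < ρ θ := fun θ => rho_pos R x₁ hx₁ hx₁R θ
  have hρ_cont : Continuous ρ := by
    apply Continuous.add
    · exact continuous_const.mul Real.continuous_cos
    · exact Real.continuous_sqrt.comp
        (continuous_const.sub (continuous_const.mul ((Real.continuous_sin).pow 2)))
  set g : ℝ → ℝ := fun θ => ρ θ ^ (-(2 * s)) / (2 * s) with hg
  have hg_cont : Continuous g :=
    (hρ_cont.rpow_const fun θ => Or.inl (hρ_pos θ).ne').div_const _
  have hg_nonneg : ∀ θ, 0 ≤ g θ := fun θ =>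
    div_nonneg (Real.rpow_nonneg (hρ_pos θ).le _) (by linarith)
  -- the intermediate sets
  set T : Set (ℝ × ℝ) := {p | R ^ 2 ≤ (p.1 + x₁) ^ 2 + p.2 ^ 2} with hT
  have hTmeas : MeasurableSet T := by
    apply measurableSet_le measurable_const
    exact (((continuous_fst.add continuous_const).pow 2).add (continuous_snd.pow 2)).measurable
  set G : ℝ × ℝ → ENNReal :=
    fun p => ENNReal.ofReal (Real.sqrt (p.1 ^ 2 + p.2 ^ 2) ^ (-(2 + 2 * s))) with hG
  set K : Set (ℝ × ℝ) := {q | ρ q.2 ≤ q.1} with hK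
  have hKmeas : MeasurableSet K :=
    measurableSet_le (hρ_cont.comp continuous_snd).measurable measurable_fst
  set F : ℝ × ℝ → ENNReal := fun q => ENNReal.ofReal (q.1 ^ (-(1 + 2 * s))) with hF
  have hFmeas : Measurable F := by
    apply Measurable.ennreal_ofReal
    measurability
  -- step A : translation
  have hA : ∫⁻ z in (fun z => z + x) ⁻¹' (Metric.ball (0 : EuclideanSpace ℝ (Fin 2)) R)ᶜ,
        ENNReal.ofReal (‖x - (z + x)‖ ^ (-(2 + 2 * s))) =
      ∫⁻ y in (Metric.ball (0 : EuclideanSpace ℝ (Fin 2)) R)ᶜ,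
        ENNReal.ofReal (‖x - y‖ ^ (-(2 + 2 * s))) :=
    (measurePreserving_add_right volume x).setLIntegral_comp_preimage_emb
      (measurableEmbedding_addRight x)
      (fun y => ENNReal.ofReal (‖x - y‖ ^ (-(2 + 2 * s))))
      (Metric.ball (0 : EuclideanSpace ℝ (Fin 2)) R)ᶜ
  -- identify the preimage set
  have hset : (fun z => z + x) ⁻¹' (Metric.ball (0 : EuclideanSpace ℝ (Fin 2)) R)ᶜ
      = φ ⁻¹' T := by
    ext z
    simp only [Set.mem_preimage, Set.mem_compl_iff, Metric.mem_ball, dist_zero_right, not_lt,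
      hT, Set.mem_setOf_eq]
    have h0 : (z + x) 0 = z 0 + x₁ := rfl
    have h1 : (z + x) 1 = z 1 := by
      show z 1 + x 1 = z 1
      simp [hx, e2]
    rw [norm_e2, h0, h1]
    rw [Real.le_sqrt hR.le (by positivity)]
    rfl
  have hintegrand : ∀ z : EuclideanSpace ℝ (Fin 2),
      ENNReal.ofReal (‖x - (z + x)‖ ^ (-(2 + 2 * s))) = G (φ z) := by
    intro z
    have : x - (z + x) = -z := by abel
    rw [this, norm_neg, norm_e2]
    rfl
  -- step B : transfer to ℝ × ℝ
  have hB : ∫⁻ z in φ ⁻¹' T, G (φ z) = ∫⁻ p in T, G p :=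
    φ_mp.setLIntegral_comp_preimage_emb φ.measurableEmbedding _ _
  -- step E pointwise identity on the polar target
  have hE : ∀ q ∈ polarCoord.target,
      ENNReal.ofReal q.1 * T.indicator G (polarCoord.symm q) = K.indicator F q := by
    rintro ⟨r, θ⟩ ⟨hr, hθ⟩
    simp only [Set.mem_Ioi] at hr
    have hmem : ((r * Real.cos θ, r * Real.sin θ) ∈ T) ↔ ρ θ ≤ r := by
      simp only [hT, Set.mem_setOf_eq]
      exact mem_iff_aux R x₁ hx₁ hx₁R θ hr
    have hval : G (r * Real.cos θ, r * Real.sin θ) = ENNReal.ofReal (r ^ (-(2 + 2 * s))) := by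
      simp only [hG]
      congr 2
      have : (r * Real.cos θ) ^ 2 + (r * Real.sin θ) ^ 2 = r ^ 2 := by
        have := sin_sq_add_cos_sq θ; nlinarith
      rw [this, Real.sqrt_sq hr.le]
    rw [polarCoord_symm_apply]
    by_cases hcase : ρ θ ≤ r
    · rw [Set.indicator_of_mem (hmem.mpr hcase), Set.indicator_of_mem (by exact hcase), hval]
      rw [← ENNReal.ofReal_mul hr.le]
      congr 1
      have hexp : -(1 + 2 * s) = 1 + -(2 + 2 * s) := by ring
      show r * r ^ (-(2 + 2 * s)) = r ^ (-(1 + 2 * s))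
      rw [hexp, Real.rpow_add hr, Real.rpow_one]
    · rw [Set.indicator_of_notMem (fun h => hcase (hmem.mp h)),
        Set.indicator_of_notMem (by exact hcase), mul_zero]
  -- inner radial integral
  have hinner : ∀ θ : ℝ, ∫⁻ r in Ioi (0:ℝ), K.indicator F (r, θ) = ENNReal.ofReal (g θ) := by
    intro θ
    have hind : ∀ r : ℝ, K.indicator F (r, θ)
        = (Ici (ρ θ)).indicator (fun r => ENNReal.ofReal (r ^ (-(1 + 2 * s)))) r := by
      intro r
      simp only [Set.indicator_apply, hK, Set.mem_setOf_eq, Set.mem_Ici, hF]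
    have hIci : Ici (ρ θ) ∩ Ioi (0:ℝ) = Ici (ρ θ) :=
      Set.inter_eq_left.mpr fun r hr => (hρ_pos θ).trans_le hr
    rw [lintegral_congr hind, lintegral_indicator measurableSet_Ici,
      Measure.restrict_restrict measurableSet_Ici, hIci]
    rw [← setLIntegral_congr (Ioi_ae_eq_Ici (a := ρ θ))]
    have hc : -(1 + 2 * s) < -1 := by linarith
    have hint : IntegrableOn (fun r : ℝ => r ^ (-(1 + 2 * s))) (Ioi (ρ θ)) :=
      integrableOn_Ioi_rpow_of_lt hc (hρ_pos θ)
    rw [← ofReal_integral_eq_lintegral_ofReal hint ?_]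
    · rw [integral_Ioi_rpow_of_lt hc (hρ_pos θ)]
      congr 1
      have h2s : -(1 + 2 * s) + 1 = -(2 * s) := by ring
      rw [h2s, hg]
      rw [neg_div_neg_eq]
    · filter_upwards [ae_restrict_mem measurableSet_Ioi] with r hr
      exact Real.rpow_nonneg ((hρ_pos θ).trans hr).le _
  -- outer angular integral
  have hIoo_int : IntegrableOn g (Ioo (-π) π) :=
    (hg_cont.integrableOn_Icc).mono_set Set.Ioo_subset_Icc_self
  have houter : ∫⁻ θ in Ioo (-π) π, ENNReal.ofReal (g θ)
      = ENNReal.ofReal (∫ θ in Ioo (-π) π, g θ) :=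
    (ofReal_integral_eq_lintegral_ofReal hIoo_int
      (Filter.Eventually.of_forall fun θ => hg_nonneg θ)).symm
  -- periodicity
  have hper : Function.Periodic g (2 * π) := by
    intro θ
    simp only [hg, hρ, Real.cos_add_two_pi, Real.sin_add_two_pi]
  have hreal : ∫ θ in Ioo (-π) π, g θ = (1 / (2 * s)) *
      ∫ θ in (0 : ℝ)..(2 * π), ρ θ ^ (-(2 * s)) := by
    have h1 : ∫ θ in Ioo (-π) π, g θ = ∫ θ in (-π)..π, g θ := by
      rw [intervalIntegral.integral_of_le (by linarith [pi_pos]), integral_Ioc_eq_integral_Ioo]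
    rw [h1]
    have h2 : ∫ θ in (-π)..π, g θ = ∫ θ in (0:ℝ)..(2 * π), g θ := by
      have := hper.intervalIntegral_add_eq (-π) 0
      simpa [(by ring : -π + 2 * π = π)] using this
    rw [h2, hg]
    rw [intervalIntegral.integral_div]
    rw [one_div, inv_mul_eq_div]
  -- assemble
  calc
    ∫⁻ y in (Metric.ball (0 : EuclideanSpace ℝ (Fin 2)) R)ᶜ,
        ENNReal.ofReal (‖x - y‖ ^ (-(2 + 2 * s)))
      = ∫⁻ z in φ ⁻¹' T, G (φ z) := by
        rw [← hA, hset]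
        exact lintegral_congr fun z => (hintegrand z)
    _ = ∫⁻ p in T, G p := hB
    _ = ∫⁻ p, T.indicator G p := (lintegral_indicator hTmeas _).symm
    _ = ∫⁻ q in polarCoord.target, ENNReal.ofReal q.1 * T.indicator G (polarCoord.symm q) :=
        (lintegral_comp_polarCoord_symm' _).symm
    _ = ∫⁻ q in polarCoord.target, K.indicator F q :=
        setLIntegral_congr_fun_ae polarCoord.open_target.measurableSet
          (Filter.Eventually.of_forall hE)
    _ = ∫⁻ θ in Ioo (-π) π, ∫⁻ r in Ioi (0:ℝ), K.indicator F (r, θ) := by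
        rw [polarCoord_target, Measure.volume_eq_prod, ← Measure.prod_restrict]
        exact lintegral_prod_symm _ (hFmeas.indicator hKmeas).aemeasurable
    _ = ∫⁻ θ in Ioo (-π) π, ENNReal.ofReal (g θ) := lintegral_congr fun θ => hinner θ
    _ = ENNReal.ofReal ((1 / (2 * s)) *
          ∫ θ in (0 : ℝ)..(2 * π), ρ θ ^ (-(2 * s))) := by rw [houter, hreal]

end ComplementPolarAux

/-- **Polar computation of the complement integral.** For `x = (x₁,0)` with `0 ≤ x₁ < R`,
the integral `ψ(x) = ∫_{ℝ²∖B(0,R)} |x−y|^{−(2+2s)} dy` is finite and equals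
`(1/(2s)) ∫₀^{2π} ρ₀(θ,x)^{−2s} dθ` with `ρ₀(θ,x) = −x₁ cos θ + √(R²−x₁² sin²θ)`. -/
theorem complement_integral_polar (s R x₁ : ℝ) (hs : s ∈ Set.Ioo (0:ℝ) 1) (hR : 0 < R)
    (hx₁ : 0 ≤ x₁) (hx₁R : x₁ < R) :
    IntegrableOn (fun y : EuclideanSpace ℝ (Fin 2) => ‖e2 x₁ 0 - y‖ ^ (-(2 + 2 * s)))
        (Metric.ball (0 : EuclideanSpace ℝ (Fin 2)) R)ᶜ volume ∧
    ∫ y in (Metric.ball (0 : EuclideanSpace ℝ (Fin 2)) R)ᶜ,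
        ‖e2 x₁ 0 - y‖ ^ (-(2 + 2 * s)) =
      (1 / (2 * s)) *
        ∫ θ in (0 : ℝ)..(2 * Real.pi),
          (-x₁ * Real.cos θ + Real.sqrt (R ^ 2 - x₁ ^ 2 * Real.sin θ ^ 2)) ^ (-(2 * s)) := by
  obtain ⟨hs0, hs1⟩ := hs
  have hmain := ComplementPolarAux.main_lintegral s R x₁ ⟨hs0, hs1⟩ hR hx₁ hx₁R
  set f : EuclideanSpace ℝ (Fin 2) → ℝ :=
    fun y => ‖e2 x₁ 0 - y‖ ^ (-(2 + 2 * s)) with hf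
  have hfm : Measurable f := by
    have h1 : Measurable fun t : ℝ => t ^ (-(2 + 2 * s)) := by measurability
    exact h1.comp ((continuous_const.sub continuous_id).norm.measurable)
  have hf_nonneg : ∀ y, 0 ≤ f y := fun y => Real.rpow_nonneg (norm_nonneg _) _
  have hV_nonneg : 0 ≤ (1 / (2 * s)) *
      ∫ θ in (0 : ℝ)..(2 * Real.pi),
        (-x₁ * Real.cos θ + Real.sqrt (R ^ 2 - x₁ ^ 2 * Real.sin θ ^ 2)) ^ (-(2 * s)) := by
    apply mul_nonneg (by positivity)
    apply intervalIntegral.integral_nonneg (by positivity)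
    intro θ _
    exact Real.rpow_nonneg (ComplementPolarAux.rho_pos R x₁ hx₁ hx₁R θ).le _
  have hint : IntegrableOn f (Metric.ball (0 : EuclideanSpace ℝ (Fin 2)) R)ᶜ volume := by
    refine ⟨hfm.aestronglyMeasurable, ?_⟩
    rw [hasFiniteIntegral_iff_ofReal (Filter.Eventually.of_forall hf_nonneg)]
    rw [hmain]
    exact ENNReal.ofReal_lt_top
  refine ⟨hint, ?_⟩
  rw [integral_eq_lintegral_of_nonneg_ae (Filter.Eventually.of_forall hf_nonneg)
    hfm.aestronglyMeasurable]
  rw [hmain, ENNReal.toReal_ofReal hV_nonneg]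
end

section
/- Let s ∈ (0,1), let B_ℓ and B_m be invertible 2×2 real matrices and p ∈ ℝ², and set χ_ℓ(x̂) = B_ℓ x̂ + p, χ_m(x̂) = B_m x̂ + p, T_ℓ = χ_ℓ(T̂), T_m = χ_m(T̂). Assume the closed triangles T_ℓ and T_m intersect exactly in the single point {p}. For x̂, ŷ ∈ T̂ define Φ₁ = φ̂₁(x̂)−φ̂₁(ŷ), Φ₂ = φ̂₂(x̂), Φ₃ = φ̂₃(x̂), Φ₄ = −φ̂₂(ŷ), Φ₅ = −φ̂₃(ŷ). Define, for η = (η₁,η₂,η₃) ∈ [0,1]³: ψ⁽¹⁾(η) = (η₂−1, 1−η₁, η₁, −η₂(1−η₃), −η₂η₃), ψ⁽²⁾(η) = (1−η₂, η₂(1−η₃), η₂η₃, η₁−1, −η₁), d⁽¹⁾(η) = B_ℓ(1, η₁) − B_m(η₂, η₂η₃), d⁽²⁾(η) = B_ℓ(η₂, η₂η₃) − B_m(1, η₁). Then for all i, j ∈ {1,…,5}: ∬_{T̂×T̂} Φ_i(x̂,ŷ) Φ_j(x̂,ŷ) / |χ_ℓ(x̂)−χ_m(ŷ)|^{2+2s}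 dx̂ dŷ = (1/(4−2s)) [ ∫_{[0,1]³} ψ⁽¹⁾_i(η)ψ⁽¹⁾_j(η) η₂ / |d⁽¹⁾(η)|^{2+2s} dη + ∫_{[0,1]³} ψ⁽²⁾_i(η)ψ⁽²⁾_j(η) η₂ / |d⁽²⁾(η)|^{2+2s} dη ], and both sides are finite. (Equivalently, the element-pair integral I_{ℓ,m}^{i,j} for two triangles sharing exactly a vertex equals 4|T_ℓ||T_m| times the left-hand side.) -/
open MeasureTheory Real Filter Set

/-- The reference triangle `T̂ = {(x̂₁, x̂₂) : 0 ≤ x̂₂ ≤ x̂₁ ≤ 1} ⊂ ℝ²`. -/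
def refTriangle : Set (EuclideanSpace ℝ (Fin 2)) :=
  {x | 0 ≤ x 1 ∧ x 1 ≤ x 0 ∧ x 0 ≤ 1}

/-- The nodal basis functions `φ̂₁(x̂)=1−x̂₁`, `φ̂₂(x̂)=x̂₁−x̂₂`, `φ̂₃(x̂)=x̂₂` on `T̂`. -/
noncomputable def refBasis (i : Fin 3) (x : EuclideanSpace ℝ (Fin 2)) : ℝ :=
  ![1 - x 0, x 0 - x 1, x 1] i

/-- The five local shape-function differences for a pair of vertex-touching triangles:
`Φ₁ = φ̂₁(x̂)−φ̂₁(ŷ)`, `Φ₂ = φ̂₂(x̂)`, `Φ₃ = φ̂₃(x̂)`, `Φ₄ = −φ̂₂(ŷ)`, `Φ₅ = −φ̂₃(ŷ)`. -/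
noncomputable def phiVertex (i : Fin 5) (x y : EuclideanSpace ℝ (Fin 2)) : ℝ :=
  ![refBasis 0 x - refBasis 0 y, refBasis 1 x, refBasis 2 x,
    -refBasis 1 y, -refBasis 2 y] i

/-- `ψ⁽¹⁾(η) = (η₂−1, 1−η₁, η₁, −η₂(1−η₃), −η₂η₃)`. -/
noncomputable def psiVertex1 (i : Fin 5) (η : Fin 3 → ℝ) : ℝ :=
  ![η 1 - 1, 1 - η 0, η 0, -(η 1 * (1 - η 2)), -(η 1 * η 2)] i

/-- `ψ⁽²⁾(η) = (1−η₂, η₂(1−η₃), η₂η₃, η₁−1, −η₁)`. -/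
noncomputable def psiVertex2 (i : Fin 5) (η : Fin 3 → ℝ) : ℝ :=
  ![1 - η 1, η 1 * (1 - η 2), η 1 * η 2, η 0 - 1, -(η 0)] i

namespace VTRaux

open Matrix

/-- The Duffy-type map `(ξ,η₁,η₂,η₃) ↦ (ξ, ξη₁, ξη₂, ξη₂η₃)`. -/
noncomputable def gmap : (Fin 4 → ℝ) → (Fin 4 → ℝ) :=
  fun a => ![a 0, a 0 * a 1, a 0 * a 2, a 0 * a 2 * a 3]

/-- Jacobian matrix of `gmap`. -/
noncomputable def Jmat (a : Fin 4 → ℝ) : Matrix (Fin 4) (Fin 4) ℝ :=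
  ![![1, 0, 0, 0], ![a 1, a 0, 0, 0], ![a 2, 0, a 0, 0], ![a 2 * a 3, 0, a 0 * a 3, a 0 * a 2]]

/-- Jacobian as a continuous linear map. -/
noncomputable def Jclm (a : Fin 4 → ℝ) : (Fin 4 → ℝ) →L[ℝ] (Fin 4 → ℝ) :=
  LinearMap.toContinuousLinearMap (Matrix.toLin' (Jmat a))

lemma Jclm_det (a : Fin 4 → ℝ) : (Jclm a).det = a 0 * (a 0 * (a 0 * a 2)) := by
  have : (Jclm a).det = LinearMap.det (Matrix.toLin' (Jmat a)) := rfl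
  rw [this, LinearMap.det_toLin']
  rw [Matrix.det_succ_row_zero]
  simp only [Fin.sum_univ_succ, Matrix.det_fin_three, Matrix.submatrix_apply]
  simp [Jmat, Fin.succAbove]
  ring

lemma hasFDerivAt_gmap (a : Fin 4 → ℝ) : HasFDerivAt gmap (Jclm a) a := by
  apply hasFDerivAt_pi''
  intro i
  have happ : ∀ (k : Fin 4), HasFDerivAt (fun x : Fin 4 → ℝ => x k)
      (ContinuousLinearMap.proj (R := ℝ) (φ := fun _ : Fin 4 => ℝ) k) a := fun k =>
    (ContinuousLinearMap.proj (R := ℝ) (φ := fun _ : Fin 4 => ℝ) k).hasFDerivAt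
  fin_cases i
  · convert! happ 0 using 1
    ext x
    simp only [Jclm, ContinuousLinearMap.comp_apply, LinearMap.coe_toContinuousLinearMap', Matrix.toLin'_apply]
    simp [Jclm, Jmat, LinearMap.coe_toContinuousLinearMap', Matrix.toLin'_apply,
      Matrix.mulVec, dotProduct, Fin.sum_univ_succ]
  · convert! (happ 0).mul (happ 1) using 1
    ext x
    simp only [Jclm, ContinuousLinearMap.comp_apply, LinearMap.coe_toContinuousLinearMap', Matrix.toLin'_apply]
    simp [Jclm, Jmat, LinearMap.coe_toContinuousLinearMap', Matrix.toLin'_apply,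
      Matrix.mulVec, dotProduct, Fin.sum_univ_succ]
    ring
  · convert! (happ 0).mul (happ 2) using 1
    ext x
    simp only [Jclm, ContinuousLinearMap.comp_apply, LinearMap.coe_toContinuousLinearMap', Matrix.toLin'_apply]
    simp [Jclm, Jmat, LinearMap.coe_toContinuousLinearMap', Matrix.toLin'_apply,
      Matrix.mulVec, dotProduct, Fin.sum_univ_succ]
    ring
  · convert! ((happ 0).mul (happ 2)).mul (happ 3) using 1
    ext x
    simp only [Jclm, ContinuousLinearMap.comp_apply, LinearMap.coe_toContinuousLinearMap', Matrix.toLin'_apply]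
    simp [Jclm, Jmat, LinearMap.coe_toContinuousLinearMap', Matrix.toLin'_apply,
      Matrix.mulVec, dotProduct, Fin.sum_univ_succ,
      show (Fin.succ 2 : Fin 4) = 3 from rfl]
    ring

/-- open unit cube in ℝ⁴ -/
def Q4 : Set (Fin 4 → ℝ) := univ.pi fun _ => Ioo (0:ℝ) 1
/-- open unit cube in ℝ³ -/
def Q3 : Set (Fin 3 → ℝ) := univ.pi fun _ => Ioo (0:ℝ) 1

def S1 : Set (Fin 4 → ℝ) :=
  {b | 0 < b 1 ∧ b 1 < b 0 ∧ b 0 < 1 ∧ 0 < b 3 ∧ b 3 < b 2 ∧ b 2 < b 0}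
def S2 : Set (Fin 4 → ℝ) :=
  {b | 0 < b 3 ∧ b 3 < b 2 ∧ b 2 < 1 ∧ 0 < b 1 ∧ b 1 < b 0 ∧ b 0 < b 2}
def TT4 : Set (Fin 4 → ℝ) :=
  {b | (0 ≤ b 1 ∧ b 1 ≤ b 0 ∧ b 0 ≤ 1) ∧ (0 ≤ b 3 ∧ b 3 ≤ b 2 ∧ b 2 ≤ 1)}

lemma measurableSet_Q4 : MeasurableSet Q4 :=
  MeasurableSet.univ_pi fun _ => measurableSet_Ioo

lemma mem_Q4 {a : Fin 4 → ℝ} : a ∈ Q4 ↔ ∀ k, 0 < a k ∧ a k < 1 := by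
  simp [Q4, Set.mem_pi, and_comm]

lemma injOn_gmap : InjOn gmap Q4 := by
  intro a ha a' ha' h
  rw [mem_Q4] at ha ha'
  have h0 : a 0 = a' 0 := congrFun h 0
  have h0pos : a 0 ≠ 0 := ne_of_gt (ha 0).1
  have h1 : a 0 * a 1 = a' 0 * a' 1 := congrFun h 1
  have h2 : a 0 * a 2 = a' 0 * a' 2 := congrFun h 2
  have h3 : a 0 * a 2 * a 3 = a' 0 * a' 2 * a' 3 := congrFun h 3
  have e1 : a 1 = a' 1 := by
    rw [← h0] at h1; exact mul_left_cancel₀ h0pos h1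
  have e2 : a 2 = a' 2 := by
    rw [← h0] at h2; exact mul_left_cancel₀ h0pos h2
  have e3 : a 3 = a' 3 := by
    rw [← h0, ← e2] at h3
    exact mul_left_cancel₀ (mul_ne_zero h0pos (ne_of_gt (ha 2).1)) h3
  funext k
  fin_cases k <;> assumption

lemma image_gmap : gmap '' Q4 = S1 := by
  ext b
  constructor
  · rintro ⟨a, ha, rfl⟩
    rw [mem_Q4] at ha
    have h0 := ha 0; have h1 := ha 1; have h2 := ha 2; have h3 := ha 3
    constructor
    · -- 0 < a 0 * a 1
      exact mul_pos h0.1 h1.1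
    refine ⟨?_, ?_, ?_, ?_, ?_⟩
    · simpa [gmap] using (mul_lt_of_lt_one_right h0.1 h1.2)
    · exact h0.2
    · exact mul_pos (mul_pos h0.1 h2.1) h3.1
    · simpa [gmap] using (mul_lt_of_lt_one_right (mul_pos h0.1 h2.1) h3.2)
    · simpa [gmap] using (mul_lt_of_lt_one_right h0.1 h2.2)
  · rintro ⟨hb1, hb10, hb01, hb3, hb32, hb20⟩
    have hb0 : 0 < b 0 := lt_trans hb1 hb10
    have hb2 : 0 < b 2 := lt_trans hb3 hb32
    refine ⟨![b 0, b 1 / b 0, b 2 / b 0, b 3 / b 2], ?_, ?_⟩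
    · rw [mem_Q4]
      intro k
      fin_cases k
      · exact ⟨hb0, hb01⟩
      · exact ⟨div_pos hb1 hb0, (div_lt_one hb0).2 hb10⟩
      · exact ⟨div_pos hb2 hb0, (div_lt_one hb0).2 hb20⟩
      · exact ⟨div_pos hb3 hb2, (div_lt_one hb2).2 hb32⟩
    · funext k
      fin_cases k <;>
        simp [gmap] <;>
        field_simp

lemma S1_subset_TT4 : S1 ⊆ TT4 := by
  rintro b ⟨h1, h2, h3, h4, h5, h6⟩
  exact ⟨⟨le_of_lt h1, le_of_lt h2, le_of_lt h3⟩,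
    ⟨le_of_lt h4, le_of_lt h5, le_of_lt (lt_trans h6 h3)⟩⟩

lemma S2_subset_TT4 : S2 ⊆ TT4 := by
  rintro b ⟨h1, h2, h3, h4, h5, h6⟩
  exact ⟨⟨le_of_lt h4, le_of_lt h5, le_of_lt (lt_trans h6 h3)⟩,
    ⟨le_of_lt h1, le_of_lt h2, le_of_lt h3⟩⟩

lemma disjoint_S1_S2 : Disjoint S1 S2 := by
  rw [Set.disjoint_left]
  rintro b ⟨_, _, _, _, _, h6⟩ ⟨_, _, _, _, _, h6'⟩
  exact absurd (lt_trans h6 h6') (lt_irrefl _)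

/-- coordinate hyperplane `{x | x i = r}` is null -/
lemma null_coord {n : ℕ} (i : Fin n) (r : ℝ) :
    volume {x : Fin n → ℝ | x i = r} = 0 := by
  classical
  have : {x : Fin n → ℝ | x i = r} =
      univ.pi fun j => if j = i then {r} else univ := by
    ext x
    simp only [Set.mem_setOf_eq, Set.mem_pi, Set.mem_univ, forall_true_left]
    constructor
    · intro h j
      by_cases hj : j = i <;> simp [hj, h]
    · intro h
      have := h i
      simpa using this
  rw [this, volume_pi_pi]
  exact Finset.prod_eq_zero (Finset.mem_univ i) (by simp)

/-- diagonal-type hyperplane `{x | x i = x j}` (i ≠ j) is null -/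
lemma null_diag {n : ℕ} (i j : Fin n) (hij : i ≠ j) :
    volume {x : Fin n → ℝ | x i = x j} = 0 := by
  set L : (Fin n → ℝ) →ₗ[ℝ] ℝ :=
    (LinearMap.proj i : (Fin n → ℝ) →ₗ[ℝ] ℝ) - LinearMap.proj j with hL
  have hker : {x : Fin n → ℝ | x i = x j} = (LinearMap.ker L : Set (Fin n → ℝ)) := by
    ext x
    simp [hL, sub_eq_zero, LinearMap.mem_ker]
  rw [hker]
  apply Measure.addHaar_submodule
  intro htop
  have : (Function.update (0 : Fin n → ℝ) i 1) ∈ LinearMap.ker L := htop ▸ Submodule.mem_top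
  simp [hL, LinearMap.mem_ker, Function.update_apply, hij.symm] at this

lemma measurableSet_S1 : MeasurableSet S1 := by
  have : S1 = {b : Fin 4 → ℝ | 0 < b 1} ∩ {b | b 1 < b 0} ∩ {b | b 0 < 1} ∩
      {b | 0 < b 3} ∩ {b | b 3 < b 2} ∩ {b | b 2 < b 0} := by
    ext b; simp [S1]; tauto
  rw [this]
  have m : ∀ k : Fin 4, Measurable fun b : Fin 4 → ℝ => b k := fun k => measurable_pi_apply k
  exact ((((((measurableSet_lt measurable_const (m 1)).inter
    (measurableSet_lt (m 1) (m 0))).inter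
    (measurableSet_lt (m 0) measurable_const)).inter
    (measurableSet_lt measurable_const (m 3))).inter
    (measurableSet_lt (m 3) (m 2))).inter
    (measurableSet_lt (m 2) (m 0)))

lemma measurableSet_S2 : MeasurableSet S2 := by
  have : S2 = {b : Fin 4 → ℝ | 0 < b 3} ∩ {b | b 3 < b 2} ∩ {b | b 2 < 1} ∩
      {b | 0 < b 1} ∩ {b | b 1 < b 0} ∩ {b | b 0 < b 2} := by
    ext b; simp [S2]; tauto
  rw [this]
  have m : ∀ k : Fin 4, Measurable fun b : Fin 4 → ℝ => b k := fun k => measurable_pi_apply k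
  exact ((((((measurableSet_lt measurable_const (m 3)).inter
    (measurableSet_lt (m 3) (m 2))).inter
    (measurableSet_lt (m 2) measurable_const)).inter
    (measurableSet_lt measurable_const (m 1))).inter
    (measurableSet_lt (m 1) (m 0))).inter
    (measurableSet_lt (m 0) (m 2)))

lemma TT4_ae_eq : TT4 =ᵐ[volume] ((S1 ∪ S2 : Set (Fin 4 → ℝ))) := by
  rw [Filter.eventuallyEq_set]
  have hnull : volume ({x : Fin 4 → ℝ | x 1 = 0} ∪ {x | x 1 = x 0} ∪ {x | x 0 = 1} ∪
      {x | x 3 = 0} ∪ {x | x 3 = x 2} ∪ {x | x 2 = 1} ∪ {x | x 0 = x 2}) = 0 := by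
    refine measure_union_null (measure_union_null (measure_union_null (measure_union_null
      (measure_union_null (measure_union_null ?_ ?_) ?_) ?_) ?_) ?_) ?_
    · exact null_coord 1 0
    · exact null_diag 1 0 (by decide)
    · exact null_coord 0 1
    · exact null_coord 3 0
    · exact null_diag 3 2 (by decide)
    · exact null_coord 2 1
    · exact null_diag 0 2 (by decide)
  have h := measure_eq_zero_iff_ae_notMem.mp hnull
  filter_upwards [h] with b hb
  simp only [Set.mem_union, not_or] at hb
  obtain ⟨⟨⟨⟨⟨⟨hb10, hb110⟩, hb01⟩, hb30⟩, hb332⟩, hb21⟩, hb02⟩ := hb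
  simp only [Set.mem_setOf_eq] at hb10 hb110 hb01 hb30 hb332 hb21 hb02
  constructor
  · rintro ⟨⟨h1, h2, h3⟩, ⟨h4, h5, h6⟩⟩
    have hb1 : 0 < b 1 := lt_of_le_of_ne h1 (Ne.symm hb10)
    have hb10' : b 1 < b 0 := lt_of_le_of_ne h2 hb110
    have hb01' : b 0 < 1 := lt_of_le_of_ne h3 hb01
    have hb3 : 0 < b 3 := lt_of_le_of_ne h4 (Ne.symm hb30)
    have hb32 : b 3 < b 2 := lt_of_le_of_ne h5 hb332
    rcases lt_or_gt_of_ne hb02 with hlt | hgt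
    · right
      exact ⟨hb3, hb32, lt_of_le_of_ne h6 hb21, hb1, hb10', hlt⟩
    · left
      exact ⟨hb1, hb10', hb01', hb3, hb32, hgt⟩
  · intro hb
    rcases hb with h | h
    · exact S1_subset_TT4 h
    · exact S2_subset_TT4 h

/-- tail of a vector in ℝ⁴ -/
def tl (a : Fin 4 → ℝ) : Fin 3 → ℝ := fun k => a k.succ

lemma mem_Icc_iff' {η : Fin 3 → ℝ} :
    η ∈ Icc (0 : Fin 3 → ℝ) 1 ↔ ∀ k, 0 ≤ η k ∧ η k ≤ 1 := by
  constructor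
  · rintro ⟨h0, h1⟩ k; exact ⟨h0 k, h1 k⟩
  · intro h; exact ⟨fun k => (h k).1, fun k => (h k).2⟩

lemma mem_Q3 {x : Fin 3 → ℝ} : x ∈ Q3 ↔ ∀ k, 0 < x k ∧ x k < 1 := by
  simp [Q3, Set.mem_pi, and_comm]

lemma tl_mem_Icc {a : Fin 4 → ℝ} (ha : a ∈ Q4) : tl a ∈ Icc (0 : Fin 3 → ℝ) 1 := by
  rw [mem_Q4] at ha
  rw [mem_Icc_iff']
  intro k
  exact ⟨le_of_lt (ha k.succ).1, le_of_lt (ha k.succ).2⟩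

lemma Q3_ae_Icc : (Q3 : Set (Fin 3 → ℝ)) =ᵐ[volume] Icc (0 : Fin 3 → ℝ) 1 := by
  rw [Filter.eventuallyEq_set]
  have hnull : volume (⋃ k : Fin 3, ({x : Fin 3 → ℝ | x k = 0} ∪ {x | x k = 1})) = 0 := by
    refine measure_iUnion_null fun k => measure_union_null (null_coord k 0) (null_coord k 1)
  filter_upwards [measure_eq_zero_iff_ae_notMem.mp hnull] with η hη
  simp only [Set.mem_iUnion, Set.mem_union, not_exists, not_or, Set.mem_setOf_eq] at hη
  constructor
  · intro h
    have : ∀ k, η k ∈ Ioo (0:ℝ) 1 := fun k => h k (Set.mem_univ k)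
    constructor <;> intro k
    · exact le_of_lt (this k).1
    · exact le_of_lt (this k).2
  · rintro ⟨h0, h1⟩
    intro k _
    exact ⟨lt_of_le_of_ne (h0 k) (Ne.symm (hη k).1), lt_of_le_of_ne (h1 k) (hη k).2⟩

/-- the splitting equivalence ℝ⁴ ≃ ℝ × ℝ³ -/
noncomputable def esplit : (Fin 4 → ℝ) ≃ᵐ ℝ × (Fin 3 → ℝ) :=
  MeasurableEquiv.piFinSuccAbove (fun _ : Fin 4 => ℝ) 0

lemma esplit_apply (a : Fin 4 → ℝ) : esplit a = (a 0, tl a) := by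
  simp only [esplit, MeasurableEquiv.piFinSuccAbove_apply]
  refine Prod.ext rfl ?_
  funext k
  simp [tl, Fin.tail, Fin.succAbove_zero]

lemma esplit_mp : MeasurePreserving esplit
    (volume : Measure (Fin 4 → ℝ))
    ((volume : Measure ℝ).prod (volume : Measure (Fin 3 → ℝ))) := by
  simp only [esplit]
  rw [volume_pi, show (volume : Measure (Fin 3 → ℝ)) = Measure.pi fun _ => volume from volume_pi]
  exact measurePreserving_piFinSuccAbove (fun _ : Fin 4 => (volume : Measure ℝ)) 0

lemma esplit_preimage : esplit ⁻¹' ((Ioo (0:ℝ) 1) ×ˢ Q3) = Q4 := by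
  ext a
  simp only [Set.mem_preimage, esplit_apply, Set.mem_prod, mem_Q4, mem_Q3, Set.mem_Ioo, tl]
  constructor
  · rintro ⟨h0, h3⟩ k
    rcases Fin.eq_zero_or_eq_succ k with rfl | ⟨k', rfl⟩
    · exact h0
    · exact h3 k'
  · intro h
    exact ⟨h 0, fun k => h k.succ⟩

lemma integral_xc (c : ℝ) (hc6 : c < 6) :
    ∫ x in Ioo (0:ℝ) 1, x ^ ((5:ℝ) - c) = 1 / (6 - c) := by
  have h1 : (-1:ℝ) < 5 - c := by linarith
  rw [← MeasureTheory.integral_Ioc_eq_integral_Ioo,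
    ← intervalIntegral.integral_of_le (zero_le_one (α := ℝ)),
    integral_rpow (Or.inl h1)]
  rw [Real.one_rpow, Real.zero_rpow (by linarith : (5:ℝ) - c + 1 ≠ 0)]
  norm_num
  rw [show (5:ℝ) - c + 1 = 6 - c by ring]

lemma integrableOn_xc (c : ℝ) (hc6 : c < 6) :
    IntegrableOn (fun x : ℝ => x ^ ((5:ℝ) - c)) (Ioo 0 1) volume := by
  have h := intervalIntegral.intervalIntegrable_rpow' (a := 0) (b := 1) (by linarith : (-1:ℝ) < 5 - c)
  rw [intervalIntegrable_iff_integrableOn_Ioc_of_le zero_le_one] at h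
  exact h.mono_set Set.Ioo_subset_Ioc_self

/-- **Core Duffy-transform lemma.** -/
lemma core (c : ℝ) (hc0 : 0 < c) (hc6 : c < 6)
    (N D : (Fin 4 → ℝ) → ℝ) (ψ dd : (Fin 3 → ℝ) → ℝ)
    (hψ : Continuous ψ) (hdd : Continuous dd)
    (hNg : ∀ a : Fin 4 → ℝ, N (gmap a) = (a 0)^2 * ψ (tl a))
    (hDg : ∀ a : Fin 4 → ℝ, 0 ≤ a 0 → D (gmap a) = a 0 * dd (tl a))
    (hdd_pos : ∀ η ∈ Icc (0 : Fin 3 → ℝ) 1, 0 < dd η) :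
    IntegrableOn (fun b => N b / D b ^ c) S1 volume ∧
    IntegrableOn (fun η => ψ η * η 1 / dd η ^ c) (Icc 0 1) volume ∧
    ∫ b in S1, N b / D b ^ c =
      (1 / (6 - c)) * ∫ η in Icc (0 : Fin 3 → ℝ) 1, ψ η * η 1 / dd η ^ c := by
  set G : (Fin 3 → ℝ) → ℝ := fun η => ψ η * η 1 / dd η ^ c with hGdef
  -- continuity and integrability of G on the cube
  have hGcont : ContinuousOn G (Icc (0 : Fin 3 → ℝ) 1) := by
    apply ContinuousOn.div
    · exact (hψ.continuousOn.mul (continuous_apply (1 : Fin 3)).continuousOn)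
    · exact hdd.continuousOn.rpow_const fun η hη => Or.inl (ne_of_gt (hdd_pos η hη))
    · exact fun η hη => ne_of_gt (Real.rpow_pos_of_pos (hdd_pos η hη) c)
  have hGIcc : IntegrableOn G (Icc (0 : Fin 3 → ℝ) 1) volume :=
    hGcont.integrableOn_compact isCompact_Icc
  have hGQ3 : IntegrableOn G Q3 volume := hGIcc.congr_set_ae Q3_ae_Icc
  have hGeq : ∫ η in Q3, G η = ∫ η in Icc (0 : Fin 3 → ℝ) 1, G η :=
    setIntegral_congr_set Q3_ae_Icc
  -- the product function on ℝ × ℝ³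
  set H : ℝ × (Fin 3 → ℝ) → ℝ := fun z => z.1 ^ ((5:ℝ) - c) * G z.2 with hHdef
  have hHint : Integrable H
      (((volume : Measure ℝ).restrict (Ioo 0 1)).prod
        ((volume : Measure (Fin 3 → ℝ)).restrict Q3)) :=
    (integrableOn_xc c hc6).mul_prod hGQ3
  have hHval : ∫ z, H z ∂(((volume : Measure ℝ).restrict (Ioo 0 1)).prod
      ((volume : Measure (Fin 3 → ℝ)).restrict Q3)) =
      (1 / (6 - c)) * ∫ η in Icc (0 : Fin 3 → ℝ) 1, G η := by
    rw [hHdef]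
    rw [MeasureTheory.integral_prod_mul (μ := (volume : Measure ℝ).restrict (Ioo 0 1))
      (ν := (volume : Measure (Fin 3 → ℝ)).restrict Q3)
      (fun x => x ^ ((5:ℝ) - c)) G]
    rw [integral_xc c hc6, hGeq]
  -- transport through esplit
  have hP : IntegrableOn (H ∘ esplit) Q4 volume := by
    rw [← esplit_preimage]
    rw [MeasurePreserving.integrableOn_comp_preimage esplit_mp
      (MeasurableEquiv.measurableEmbedding esplit)]
    rw [IntegrableOn, ← Measure.prod_restrict]
    exact hHint
  have hPval : ∫ a in Q4, H (esplit a) =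
      (1 / (6 - c)) * ∫ η in Icc (0 : Fin 3 → ℝ) 1, G η := by
    rw [← esplit_preimage,
      MeasurePreserving.setIntegral_preimage_emb esplit_mp
        (MeasurableEquiv.measurableEmbedding esplit) H _]
    rw [← hHval, ← Measure.prod_restrict]
  -- pointwise identity on Q4
  have hkey : ∀ a ∈ Q4, |(Jclm a).det| • (N (gmap a) / D (gmap a) ^ c) = H (esplit a) := by
    intro a ha
    have haQ := ha
    rw [mem_Q4] at ha
    have h0 : 0 < a 0 := (ha 0).1
    have h2 : 0 < a 2 := (ha 2).1
    have hddpos : 0 < dd (tl a) := hdd_pos _ (tl_mem_Icc haQ)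
    rw [esplit_apply]
    rw [Jclm_det, hNg a, hDg a (le_of_lt h0)]
    have habs : |a 0 * (a 0 * (a 0 * a 2))| = a 0 * (a 0 * (a 0 * a 2)) :=
      abs_of_pos (by positivity)
    rw [habs, smul_eq_mul]
    show _ = (a 0) ^ ((5:ℝ) - c) * (ψ (tl a) * (tl a) 1 / dd (tl a) ^ c)
    have hmul : (a 0 * dd (tl a)) ^ c = (a 0) ^ c * dd (tl a) ^ c :=
      Real.mul_rpow (le_of_lt h0) (le_of_lt hddpos)
    have h5 : (a 0) ^ ((5:ℝ) - c) = (a 0)^(5:ℕ) / (a 0) ^ c := by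
      rw [Real.rpow_sub h0, show ((5:ℝ)) = ((5:ℕ):ℝ) by norm_num, Real.rpow_natCast]
    have ht1 : (tl a) 1 = a 2 := rfl
    rw [hmul, h5, ht1]
    have hc0' : (a 0) ^ c ≠ 0 := ne_of_gt (Real.rpow_pos_of_pos h0 c)
    have hd0' : dd (tl a) ^ c ≠ 0 := ne_of_gt (Real.rpow_pos_of_pos hddpos c)
    field_simp
  -- change of variables
  have hfd : ∀ a ∈ Q4, HasFDerivWithinAt gmap (Jclm a) Q4 a :=
    fun a _ => (hasFDerivAt_gmap a).hasFDerivWithinAt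
  have hI1 : IntegrableOn (fun b => N b / D b ^ c) S1 volume := by
    rw [← image_gmap,
      integrableOn_image_iff_integrableOn_abs_det_fderiv_smul volume measurableSet_Q4
        hfd injOn_gmap]
    exact (hP.congr_fun (fun a ha => (hkey a ha).symm) measurableSet_Q4)
  have hval : ∫ b in S1, N b / D b ^ c =
      (1 / (6 - c)) * ∫ η in Icc (0 : Fin 3 → ℝ) 1, G η := by
    rw [← image_gmap,
      integral_image_eq_integral_abs_det_fderiv_smul volume measurableSet_Q4 hfd injOn_gmap]
    rw [setIntegral_congr_fun measurableSet_Q4 hkey]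
    exact hPval
  exact ⟨hI1, hGIcc, hval⟩

lemma e2_apply (a b : ℝ) (i : Fin 2) : e2 a b i = ![a, b] i := by
  simp [e2]

/-- the identification ℝ⁴ ≃ E × E -/
noncomputable def psi4 : (Fin 4 → ℝ) ≃ᵐ EuclideanSpace ℝ (Fin 2) × EuclideanSpace ℝ (Fin 2) :=
  ((MeasurableEquiv.piCongrLeft (fun _ : Fin 4 => ℝ) (finSumFinEquiv (m := 2) (n := 2))).symm.trans
    (MeasurableEquiv.sumPiEquivProdPi (fun _ : Fin 2 ⊕ Fin 2 => ℝ))).trans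
    ((MeasurableEquiv.toLp 2 (Fin 2 → ℝ)).symm.symm.prodCongr
      (MeasurableEquiv.toLp 2 (Fin 2 → ℝ)).symm.symm)

lemma psi4_mp : MeasurePreserving psi4
    (volume : Measure (Fin 4 → ℝ))
    (volume : Measure (EuclideanSpace ℝ (Fin 2) × EuclideanSpace ℝ (Fin 2))) := by
  have h1 := (volume_measurePreserving_piCongrLeft (fun _ : Fin 4 => ℝ) (finSumFinEquiv (m := 2) (n := 2))).symm
  have h2 := volume_measurePreserving_sumPiEquivProdPi (fun _ : Fin 2 ⊕ Fin 2 => ℝ)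
  have h3 := ((EuclideanSpace.volume_preserving_symm_measurableEquiv_toLp (Fin 2)).symm).prod
    ((EuclideanSpace.volume_preserving_symm_measurableEquiv_toLp (Fin 2)).symm)
  exact h3.comp (h2.comp h1)

lemma psi4_apply (b : Fin 4 → ℝ) : psi4 b = (e2 (b 0) (b 1), e2 (b 2) (b 3)) := by
  have h1 : ∀ x : Fin 2 ⊕ Fin 2 → ℝ,
      (MeasurableEquiv.sumPiEquivProdPi (fun _ : Fin 2 ⊕ Fin 2 => ℝ)) x =
        (fun i => x (Sum.inl i), fun i => x (Sum.inr i)) := fun x => rfl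
  have key : psi4 b =
      ((MeasurableEquiv.toLp 2 (Fin 2 → ℝ)).symm.symm fun i => b ((finSumFinEquiv (m := 2) (n := 2)) (Sum.inl i)),
       (MeasurableEquiv.toLp 2 (Fin 2 → ℝ)).symm.symm fun i => b ((finSumFinEquiv (m := 2) (n := 2)) (Sum.inr i))) := by
    rfl
  rw [key]
  have hsymm : ∀ x : Fin 2 → ℝ, (MeasurableEquiv.toLp 2 (Fin 2 → ℝ)).symm.symm x =
      (WithLp.equiv 2 (Fin 2 → ℝ)).symm x := fun x => rfl
  rw [hsymm, hsymm]
  unfold e2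
  congr 1
  · congr 1
    funext i
    fin_cases i <;> rfl
  · congr 1
    funext i
    fin_cases i <;> rfl

lemma psi4_preimage : psi4 ⁻¹' (refTriangle ×ˢ refTriangle) = TT4 := by
  ext b
  rw [Set.mem_preimage, psi4_apply]
  simp only [Set.mem_prod, refTriangle, Set.mem_setOf_eq, TT4, e2_apply]
  simp [Matrix.cons_val_zero, Matrix.cons_val_one]

lemma lin_eq_zero {B : Matrix (Fin 2) (Fin 2) ℝ} (hB : IsUnit B.det)
    {u : EuclideanSpace ℝ (Fin 2)} (h : Matrix.toEuclideanLin B u = 0) : u = 0 := by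
  have hw : B *ᵥ (WithLp.equiv 2 (Fin 2 → ℝ) u) = 0 := by
    have := congrArg (WithLp.equiv 2 (Fin 2 → ℝ)) h
    simpa using this
  have hu : (WithLp.equiv 2 (Fin 2 → ℝ)) u = 0 := by
    have h2 : B⁻¹ *ᵥ (B *ᵥ (WithLp.equiv 2 (Fin 2 → ℝ) u)) =
        (WithLp.equiv 2 (Fin 2 → ℝ)) u := by
      rw [Matrix.mulVec_mulVec, Matrix.nonsing_inv_mul _ hB, Matrix.one_mulVec]
    rw [hw, Matrix.mulVec_zero] at h2
    exact h2.symm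
  simpa using congrArg (WithLp.equiv 2 (Fin 2 → ℝ)).symm hu

lemma sep {Bl Bm : Matrix (Fin 2) (Fin 2) ℝ} (hBl : IsUnit Bl.det) (hBm : IsUnit Bm.det)
    {p : EuclideanSpace ℝ (Fin 2)}
    (hint : ((fun x => Matrix.toEuclideanLin Bl x + p) '' refTriangle) ∩
        ((fun x => Matrix.toEuclideanLin Bm x + p) '' refTriangle) = {p})
    {u v : EuclideanSpace ℝ (Fin 2)} (hu : u ∈ refTriangle) (hv : v ∈ refTriangle)
    (h : Matrix.toEuclideanLin Bl u = Matrix.toEuclideanLin Bm v) : u = 0 ∧ v = 0 := by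
  have hq : Matrix.toEuclideanLin Bl u + p ∈
      ((fun x => Matrix.toEuclideanLin Bl x + p) '' refTriangle) ∩
        ((fun x => Matrix.toEuclideanLin Bm x + p) '' refTriangle) :=
    ⟨⟨u, hu, rfl⟩, ⟨v, hv, show Matrix.toEuclideanLin Bm v + p = _ by rw [← h]⟩⟩
  rw [hint, Set.mem_singleton_iff] at hq
  have h0 : Matrix.toEuclideanLin Bl u = 0 := by
    have := hq
    rwa [add_eq_right] at this
  refine ⟨lin_eq_zero hBl h0, lin_eq_zero hBm (by rw [← h]; exact h0)⟩

lemma e2_smul (t u v : ℝ) : e2 (t * u) (t * v) = t • e2 u v := by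
  unfold e2
  show WithLp.toLp 2 ![t * u, t * v] = t • WithLp.toLp 2 ![u, v]
  rw [← WithLp.toLp_smul]
  congr 1
  funext i
  fin_cases i <;> simp

lemma mem_refTriangle_e2 {u v : ℝ} (h1 : 0 ≤ v) (h2 : v ≤ u) (h3 : u ≤ 1) :
    e2 u v ∈ refTriangle := by
  refine ⟨?_, ?_, ?_⟩ <;> simp [e2_apply, h1, h2, h3]

lemma e2_one_mem {x : ℝ} (h0 : 0 ≤ x) (h1 : x ≤ 1) : e2 1 x ∈ refTriangle :=
  mem_refTriangle_e2 h0 h1 le_rfl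

lemma e2_prod_mem {x y : ℝ} (hx0 : 0 ≤ x) (hx1 : x ≤ 1) (hy0 : 0 ≤ y) (hy1 : y ≤ 1) :
    e2 x (x * y) ∈ refTriangle :=
  mem_refTriangle_e2 (mul_nonneg hx0 hy0) (mul_le_of_le_one_right hx0 hy1) hx1

lemma e2_ne_zero_of_one (x : ℝ) : e2 1 x ≠ 0 := by
  intro h
  have := congrFun (congrArg (WithLp.equiv 2 (Fin 2 → ℝ)) h) 0
  simp [e2] at this

/-- positivity of the region-1 denominator on the cube -/
lemma dpos1 {Bl Bm : Matrix (Fin 2) (Fin 2) ℝ} (hBl : IsUnit Bl.det) (hBm : IsUnit Bm.det)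
    {p : EuclideanSpace ℝ (Fin 2)}
    (hint : ((fun x => Matrix.toEuclideanLin Bl x + p) '' refTriangle) ∩
        ((fun x => Matrix.toEuclideanLin Bm x + p) '' refTriangle) = {p}) :
    ∀ η ∈ Icc (0 : Fin 3 → ℝ) 1,
      0 < ‖Matrix.toEuclideanLin Bl (e2 1 (η 0)) -
        Matrix.toEuclideanLin Bm (e2 (η 1) (η 1 * η 2))‖ := by
  intro η hη
  rw [mem_Icc_iff'] at hη
  rw [norm_pos_iff, sub_ne_zero]
  intro heq
  have h := sep hBl hBm hint (e2_one_mem (hη 0).1 (hη 0).2)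
    (e2_prod_mem (hη 1).1 (hη 1).2 (hη 2).1 (hη 2).2) heq
  exact e2_ne_zero_of_one (η 0) h.1

/-- positivity of the region-2 denominator on the cube -/
lemma dpos2 {Bl Bm : Matrix (Fin 2) (Fin 2) ℝ} (hBl : IsUnit Bl.det) (hBm : IsUnit Bm.det)
    {p : EuclideanSpace ℝ (Fin 2)}
    (hint : ((fun x => Matrix.toEuclideanLin Bl x + p) '' refTriangle) ∩
        ((fun x => Matrix.toEuclideanLin Bm x + p) '' refTriangle) = {p}) :
    ∀ η ∈ Icc (0 : Fin 3 → ℝ) 1,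
      0 < ‖Matrix.toEuclideanLin Bl (e2 (η 1) (η 1 * η 2)) -
        Matrix.toEuclideanLin Bm (e2 1 (η 0))‖ := by
  intro η hη
  rw [mem_Icc_iff'] at hη
  rw [norm_pos_iff, sub_ne_zero]
  intro heq
  have h := sep hBl hBm hint (e2_prod_mem (hη 1).1 (hη 1).2 (hη 2).1 (hη 2).2)
    (e2_one_mem (hη 0).1 (hη 0).2) heq
  exact e2_ne_zero_of_one (η 0) h.2

def sigma4 : Equiv.Perm (Fin 4) where
  toFun := ![2, 3, 0, 1]
  invFun := ![2, 3, 0, 1]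
  left_inv := by decide
  right_inv := by decide

noncomputable def permEquiv : (Fin 4 → ℝ) ≃ᵐ (Fin 4 → ℝ) :=
  MeasurableEquiv.piCongrLeft (fun _ : Fin 4 => ℝ) sigma4

lemma permEquiv_apply (b : Fin 4 → ℝ) : permEquiv b = ![b 2, b 3, b 0, b 1] := by
  funext k
  fin_cases k <;> rfl

lemma perm_mp : MeasurePreserving permEquiv
    (volume : Measure (Fin 4 → ℝ)) (volume : Measure (Fin 4 → ℝ)) :=
  volume_measurePreserving_piCongrLeft _ sigma4

lemma perm_preimage : permEquiv ⁻¹' S1 = S2 := by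
  ext b
  rw [Set.mem_preimage, permEquiv_apply]
  simp only [S1, S2, Set.mem_setOf_eq]
  simp only [Matrix.cons_val_zero, Matrix.cons_val_one, Matrix.head_cons,
    Matrix.cons_val_two, Matrix.tail_cons, Matrix.cons_val_three]

lemma phi_comp1 (i : Fin 5) (a : Fin 4 → ℝ) :
    phiVertex i (e2 (a 0) (a 0 * a 1)) (e2 (a 0 * a 2) (a 0 * a 2 * a 3)) =
      a 0 * psiVertex1 i (tl a) := by
  have t0 : tl a 0 = a 1 := rfl
  have t1 : tl a 1 = a 2 := rfl
  have t2 : tl a 2 = a 3 := rfl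
  fin_cases i <;>
    simp [phiVertex, psiVertex1, refBasis, e2_apply, t0, t1, t2] <;> ring

lemma phi_comp2 (i : Fin 5) (a : Fin 4 → ℝ) :
    phiVertex i (e2 (a 0 * a 2) (a 0 * a 2 * a 3)) (e2 (a 0) (a 0 * a 1)) =
      a 0 * psiVertex2 i (tl a) := by
  have t0 : tl a 0 = a 1 := rfl
  have t1 : tl a 1 = a 2 := rfl
  have t2 : tl a 2 = a 3 := rfl
  fin_cases i <;>
    simp [phiVertex, psiVertex2, refBasis, e2_apply, t0, t1, t2] <;> ring

lemma D_comp1 (Bl Bm : Matrix (Fin 2) (Fin 2) ℝ) (a : Fin 4 → ℝ) (h0 : 0 ≤ a 0) :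
    ‖Matrix.toEuclideanLin Bl (e2 (a 0) (a 0 * a 1)) -
      Matrix.toEuclideanLin Bm (e2 (a 0 * a 2) (a 0 * a 2 * a 3))‖ =
    a 0 * ‖Matrix.toEuclideanLin Bl (e2 1 (a 1)) -
      Matrix.toEuclideanLin Bm (e2 (a 2) (a 2 * a 3))‖ := by
  have h1 : e2 (a 0) (a 0 * a 1) = a 0 • e2 1 (a 1) := by
    rw [← e2_smul, mul_one]
  have h2 : e2 (a 0 * a 2) (a 0 * a 2 * a 3) = a 0 • e2 (a 2) (a 2 * a 3) := by
    rw [← e2_smul, mul_assoc]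
  rw [h1, h2, LinearMap.map_smul, LinearMap.map_smul, ← smul_sub, norm_smul, Real.norm_eq_abs, abs_of_nonneg h0]

lemma D_comp2 (Bl Bm : Matrix (Fin 2) (Fin 2) ℝ) (a : Fin 4 → ℝ) (h0 : 0 ≤ a 0) :
    ‖Matrix.toEuclideanLin Bl (e2 (a 0 * a 2) (a 0 * a 2 * a 3)) -
      Matrix.toEuclideanLin Bm (e2 (a 0) (a 0 * a 1))‖ =
    a 0 * ‖Matrix.toEuclideanLin Bl (e2 (a 2) (a 2 * a 3)) -
      Matrix.toEuclideanLin Bm (e2 1 (a 1))‖ := by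
  have h1 : e2 (a 0) (a 0 * a 1) = a 0 • e2 1 (a 1) := by
    rw [← e2_smul, mul_one]
  have h2 : e2 (a 0 * a 2) (a 0 * a 2 * a 3) = a 0 • e2 (a 2) (a 2 * a 3) := by
    rw [← e2_smul, mul_assoc]
  rw [h1, h2, LinearMap.map_smul, LinearMap.map_smul, ← smul_sub, norm_smul, Real.norm_eq_abs, abs_of_nonneg h0]

lemma continuous_psi1 (i : Fin 5) : Continuous (psiVertex1 i) := by
  have h : psiVertex1 i = fun η : Fin 3 → ℝ =>
      ![η 1 - 1, 1 - η 0, η 0, -(η 1 * (1 - η 2)), -(η 1 * η 2)] i := rfl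
  rw [h]
  fin_cases i <;> simp <;> fun_prop

lemma continuous_psi2 (i : Fin 5) : Continuous (psiVertex2 i) := by
  have h : psiVertex2 i = fun η : Fin 3 → ℝ =>
      ![1 - η 1, η 1 * (1 - η 2), η 1 * η 2, η 0 - 1, -(η 0)] i := rfl
  rw [h]
  fin_cases i <;> simp <;> fun_prop

lemma continuous_e2c : Continuous fun q : ℝ × ℝ => e2 q.1 q.2 := by
  unfold e2
  apply Continuous.comp
  · exact PiLp.continuous_toLp 2 (fun _ : Fin 2 => ℝ)
  · apply continuous_pi
    intro k
    fin_cases k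
    · simpa using continuous_fst
    · simpa using continuous_snd

lemma continuous_lin (B : Matrix (Fin 2) (Fin 2) ℝ) :
    Continuous (Matrix.toEuclideanLin B) :=
  LinearMap.continuous_of_finiteDimensional _

lemma continuous_e2f {f g : (Fin 3 → ℝ) → ℝ} (hf : Continuous f) (hg : Continuous g) :
    Continuous fun η => e2 (f η) (g η) := by
  have := continuous_e2c.comp (hf.prodMk hg)
  exact this

lemma continuous_linf {B : Matrix (Fin 2) (Fin 2) ℝ} {f : (Fin 3 → ℝ) → EuclideanSpace ℝ (Fin 2)}
    (hf : Continuous f) : Continuous fun η => Matrix.toEuclideanLin B (f η) := by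
  have := (continuous_lin B).comp hf
  exact this

lemma continuous_dd1 (Bl Bm : Matrix (Fin 2) (Fin 2) ℝ) :
    Continuous fun η : Fin 3 → ℝ =>
      ‖Matrix.toEuclideanLin Bl (e2 1 (η 0)) -
        Matrix.toEuclideanLin Bm (e2 (η 1) (η 1 * η 2))‖ := by
  apply Continuous.norm
  exact (continuous_linf (continuous_e2f continuous_const (continuous_apply 0))).sub
    (continuous_linf (continuous_e2f (continuous_apply 1)
      ((continuous_apply 1).mul (continuous_apply 2))))

lemma continuous_dd2 (Bl Bm : Matrix (Fin 2) (Fin 2) ℝ) :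
    Continuous fun η : Fin 3 → ℝ =>
      ‖Matrix.toEuclideanLin Bl (e2 (η 1) (η 1 * η 2)) -
        Matrix.toEuclideanLin Bm (e2 1 (η 0))‖ := by
  apply Continuous.norm
  exact (continuous_linf (continuous_e2f (continuous_apply 1)
      ((continuous_apply 1).mul (continuous_apply 2)))).sub
    (continuous_linf (continuous_e2f continuous_const (continuous_apply 0)))

end VTRaux

open VTRaux

/-- **Reduction of the singular integral over a pair of vertex-touching triangles.**
If `T_ℓ = χ_ℓ(T̂)` and `T_m = χ_m(T̂)` intersect exactly at the single point `p`, then for all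
local indices `i, j` the singular double integral over `T̂ × T̂` is absolutely convergent and
equals `1/(4−2s)` times the sum of two regular integrals over the unit cube `[0,1]³`. -/
theorem vertex_touching_reduction (s : ℝ) (hs : s ∈ Set.Ioo (0:ℝ) 1)
    (Bl Bm : Matrix (Fin 2) (Fin 2) ℝ) (hBl : IsUnit Bl.det) (hBm : IsUnit Bm.det)
    (p : EuclideanSpace ℝ (Fin 2))
    (hint : ((fun x => Matrix.toEuclideanLin Bl x + p) '' refTriangle) ∩
        ((fun x => Matrix.toEuclideanLin Bm x + p) '' refTriangle) = {p})
    (i j : Fin 5) :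
    IntegrableOn
      (fun q : EuclideanSpace ℝ (Fin 2) × EuclideanSpace ℝ (Fin 2) =>
        phiVertex i q.1 q.2 * phiVertex j q.1 q.2 /
          ‖(Matrix.toEuclideanLin Bl q.1 + p) - (Matrix.toEuclideanLin Bm q.2 + p)‖ ^
            ((2 : ℝ) + 2 * s))
      (refTriangle ×ˢ refTriangle) volume ∧
    IntegrableOn
      (fun η : Fin 3 → ℝ => psiVertex1 i η * psiVertex1 j η * η 1 /
        ‖Matrix.toEuclideanLin Bl (e2 1 (η 0)) -
          Matrix.toEuclideanLin Bm (e2 (η 1) (η 1 * η 2))‖ ^ ((2 : ℝ) + 2 * s))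
      (Set.Icc 0 1) volume ∧
    IntegrableOn
      (fun η : Fin 3 → ℝ => psiVertex2 i η * psiVertex2 j η * η 1 /
        ‖Matrix.toEuclideanLin Bl (e2 (η 1) (η 1 * η 2)) -
          Matrix.toEuclideanLin Bm (e2 1 (η 0))‖ ^ ((2 : ℝ) + 2 * s))
      (Set.Icc 0 1) volume ∧
    ∫ x in refTriangle, ∫ y in refTriangle,
        phiVertex i x y * phiVertex j x y /
          ‖(Matrix.toEuclideanLin Bl x + p) - (Matrix.toEuclideanLin Bm y + p)‖ ^
            ((2 : ℝ) + 2 * s) =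
      (1 / (4 - 2 * s)) *
        ((∫ η in Set.Icc (0 : Fin 3 → ℝ) 1,
            psiVertex1 i η * psiVertex1 j η * η 1 /
              ‖Matrix.toEuclideanLin Bl (e2 1 (η 0)) -
                Matrix.toEuclideanLin Bm (e2 (η 1) (η 1 * η 2))‖ ^ ((2 : ℝ) + 2 * s)) +
         (∫ η in Set.Icc (0 : Fin 3 → ℝ) 1,
            psiVertex2 i η * psiVertex2 j η * η 1 /
              ‖Matrix.toEuclideanLin Bl (e2 (η 1) (η 1 * η 2)) -
                Matrix.toEuclideanLin Bm (e2 1 (η 0))‖ ^ ((2 : ℝ) + 2 * s))) := by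
  obtain ⟨hs0, hs1⟩ := hs
  have hc0 : (0:ℝ) < 2 + 2 * s := by linarith
  have hc6 : (2:ℝ) + 2 * s < 6 := by linarith
  simp only [add_sub_add_right_eq_sub]
  set c : ℝ := 2 + 2 * s with hcdef
  -- region-1 data
  set N1 : (Fin 4 → ℝ) → ℝ := fun b =>
    phiVertex i (e2 (b 0) (b 1)) (e2 (b 2) (b 3)) *
      phiVertex j (e2 (b 0) (b 1)) (e2 (b 2) (b 3)) with hN1def
  set D1 : (Fin 4 → ℝ) → ℝ := fun b =>
    ‖Matrix.toEuclideanLin Bl (e2 (b 0) (b 1)) -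
      Matrix.toEuclideanLin Bm (e2 (b 2) (b 3))‖ with hD1def
  set ψ1 : (Fin 3 → ℝ) → ℝ := fun η => psiVertex1 i η * psiVertex1 j η with hψ1def
  set dd1 : (Fin 3 → ℝ) → ℝ := fun η =>
    ‖Matrix.toEuclideanLin Bl (e2 1 (η 0)) -
      Matrix.toEuclideanLin Bm (e2 (η 1) (η 1 * η 2))‖ with hdd1def
  -- region-2 data
  set N2 : (Fin 4 → ℝ) → ℝ := fun b =>
    phiVertex i (e2 (b 2) (b 3)) (e2 (b 0) (b 1)) *
      phiVertex j (e2 (b 2) (b 3)) (e2 (b 0) (b 1)) with hN2def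
  set D2 : (Fin 4 → ℝ) → ℝ := fun b =>
    ‖Matrix.toEuclideanLin Bl (e2 (b 2) (b 3)) -
      Matrix.toEuclideanLin Bm (e2 (b 0) (b 1))‖ with hD2def
  set ψ2 : (Fin 3 → ℝ) → ℝ := fun η => psiVertex2 i η * psiVertex2 j η with hψ2def
  set dd2 : (Fin 3 → ℝ) → ℝ := fun η =>
    ‖Matrix.toEuclideanLin Bl (e2 (η 1) (η 1 * η 2)) -
      Matrix.toEuclideanLin Bm (e2 1 (η 0))‖ with hdd2def
  have hNg1 : ∀ a : Fin 4 → ℝ, N1 (gmap a) = (a 0) ^ 2 * ψ1 (tl a) := by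
    intro a
    show phiVertex i (e2 (a 0) (a 0 * a 1)) (e2 (a 0 * a 2) (a 0 * a 2 * a 3)) *
        phiVertex j (e2 (a 0) (a 0 * a 1)) (e2 (a 0 * a 2) (a 0 * a 2 * a 3)) =
      a 0 ^ 2 * (psiVertex1 i (tl a) * psiVertex1 j (tl a))
    rw [phi_comp1 i, phi_comp1 j]
    ring
  have hNg2 : ∀ a : Fin 4 → ℝ, N2 (gmap a) = (a 0) ^ 2 * ψ2 (tl a) := by
    intro a
    show phiVertex i (e2 (a 0 * a 2) (a 0 * a 2 * a 3)) (e2 (a 0) (a 0 * a 1)) *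
        phiVertex j (e2 (a 0 * a 2) (a 0 * a 2 * a 3)) (e2 (a 0) (a 0 * a 1)) =
      a 0 ^ 2 * (psiVertex2 i (tl a) * psiVertex2 j (tl a))
    rw [phi_comp2 i, phi_comp2 j]
    ring
  have hDg1 : ∀ a : Fin 4 → ℝ, 0 ≤ a 0 → D1 (gmap a) = a 0 * dd1 (tl a) := by
    intro a h0
    show ‖Matrix.toEuclideanLin Bl (e2 (a 0) (a 0 * a 1)) -
        Matrix.toEuclideanLin Bm (e2 (a 0 * a 2) (a 0 * a 2 * a 3))‖ =
      a 0 * ‖Matrix.toEuclideanLin Bl (e2 1 (a 1)) -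
        Matrix.toEuclideanLin Bm (e2 (a 2) (a 2 * a 3))‖
    exact D_comp1 Bl Bm a h0
  have hDg2 : ∀ a : Fin 4 → ℝ, 0 ≤ a 0 → D2 (gmap a) = a 0 * dd2 (tl a) := by
    intro a h0
    show ‖Matrix.toEuclideanLin Bl (e2 (a 0 * a 2) (a 0 * a 2 * a 3)) -
        Matrix.toEuclideanLin Bm (e2 (a 0) (a 0 * a 1))‖ =
      a 0 * ‖Matrix.toEuclideanLin Bl (e2 (a 2) (a 2 * a 3)) -
        Matrix.toEuclideanLin Bm (e2 1 (a 1))‖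
    exact D_comp2 Bl Bm a h0
  obtain ⟨hI1, hC1, hV1⟩ := core c hc0 hc6 N1 D1 ψ1 dd1
    ((continuous_psi1 i).mul (continuous_psi1 j)) (continuous_dd1 Bl Bm)
    hNg1 hDg1 (dpos1 hBl hBm hint)
  obtain ⟨hI2, hC2, hV2⟩ := core c hc0 hc6 N2 D2 ψ2 dd2
    ((continuous_psi2 i).mul (continuous_psi2 j)) (continuous_dd2 Bl Bm)
    hNg2 hDg2 (dpos2 hBl hBm hint)
  -- region 2 via the coordinate swap
  set f4 : (Fin 4 → ℝ) → ℝ := fun b => N1 b / D1 b ^ c with hf4def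
  set g4 : (Fin 4 → ℝ) → ℝ := fun b => N2 b / D2 b ^ c with hg4def
  have hcomp : ∀ b, g4 (permEquiv b) = f4 b := by
    intro b
    show N2 (permEquiv b) / D2 (permEquiv b) ^ c = N1 b / D1 b ^ c
    rw [permEquiv_apply]
    rfl
  have hIS2 : IntegrableOn f4 S2 volume := by
    have h := (perm_mp.integrableOn_comp_preimage permEquiv.measurableEmbedding
      (f := g4) (s := S1)).2 hI2
    rw [perm_preimage] at h
    exact h.congr_fun (fun b _ => (hcomp b).symm) measurableSet_S2
  have hVS2 : ∫ b in S2, f4 b =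
      (1 / (6 - c)) * ∫ η in Icc (0 : Fin 3 → ℝ) 1, ψ2 η * η 1 / dd2 η ^ c := by
    have h := perm_mp.setIntegral_preimage_emb permEquiv.measurableEmbedding g4 S1
    rw [perm_preimage] at h
    calc ∫ b in S2, f4 b = ∫ b in S2, g4 (permEquiv b) :=
          setIntegral_congr_fun measurableSet_S2 fun b _ => (hcomp b).symm
      _ = ∫ b in S1, g4 b := h
      _ = _ := hV2
  -- combine over TT4
  have hIU : IntegrableOn f4 (S1 ∪ S2) volume := hI1.union hIS2
  have hITT : IntegrableOn f4 TT4 volume := hIU.congr_set_ae TT4_ae_eq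
  have hVTT : ∫ b in TT4, f4 b = (∫ b in S1, f4 b) + ∫ b in S2, f4 b := by
    rw [setIntegral_congr_set TT4_ae_eq,
      setIntegral_union disjoint_S1_S2 measurableSet_S2 hI1 hIS2]
  -- transport to E × E
  set F : EuclideanSpace ℝ (Fin 2) × EuclideanSpace ℝ (Fin 2) → ℝ := fun q =>
    phiVertex i q.1 q.2 * phiVertex j q.1 q.2 /
      ‖Matrix.toEuclideanLin Bl q.1 - Matrix.toEuclideanLin Bm q.2‖ ^ c with hFdef
  have hFcomp : (F ∘ psi4) = f4 := by
    funext b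
    show F (psi4 b) = f4 b
    rw [psi4_apply]
  have hIF : IntegrableOn F (refTriangle ×ˢ refTriangle) volume := by
    refine (psi4_mp.integrableOn_comp_preimage psi4.measurableEmbedding).1 ?_
    rw [hFcomp, psi4_preimage]
    exact hITT
  refine ⟨hIF, hC1, hC2, ?_⟩
  -- final computation
  have hIF' : IntegrableOn F (refTriangle ×ˢ refTriangle)
      ((volume : Measure (EuclideanSpace ℝ (Fin 2))).prod volume) := by
    rw [← Measure.volume_eq_prod]
    exact hIF
  have hprod := MeasureTheory.setIntegral_prod F hIF'
  have htrans : ∫ q in refTriangle ×ˢ refTriangle, F q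
      ∂((volume : Measure (EuclideanSpace ℝ (Fin 2))).prod volume) = ∫ b in TT4, f4 b := by
    rw [← Measure.volume_eq_prod, ← psi4_preimage, ← hFcomp]
    exact (psi4_mp.setIntegral_preimage_emb psi4.measurableEmbedding F _).symm
  calc ∫ x in refTriangle, ∫ y in refTriangle,
        phiVertex i x y * phiVertex j x y /
          ‖Matrix.toEuclideanLin Bl x - Matrix.toEuclideanLin Bm y‖ ^ c
      = ∫ b in TT4, f4 b := by rw [← htrans, hprod]
    _ = (∫ b in S1, f4 b) + ∫ b in S2, f4 b := hVTT
    _ = (1 / (6 - c)) * (∫ η in Icc (0 : Fin 3 → ℝ) 1, ψ1 η * η 1 / dd1 η ^ c) +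
        (1 / (6 - c)) * (∫ η in Icc (0 : Fin 3 → ℝ) 1, ψ2 η * η 1 / dd2 η ^ c) := by
          rw [hV1, hVS2]
    _ = (1 / (4 - 2 * s)) *
        ((∫ η in Icc (0 : Fin 3 → ℝ) 1, ψ1 η * η 1 / dd1 η ^ c) +
         (∫ η in Icc (0 : Fin 3 → ℝ) 1, ψ2 η * η 1 / dd2 η ^ c)) := by
          rw [show (6:ℝ) - c = 4 - 2 * s by rw [hcdef]; ring]
          ring
end
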